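/- Under the same perturbative hypotheses, if additionally ∫ h dp_σ > 0, then the ratio D(θ)/(F(θ) − f₀) converges as θ → 0⁺ to √Var(h) / ∫ h dp_σ. -/

import Mathlib

open MeasureTheory Asymptotics Filter

private lemma sqrt_two_aux (p : Measure ℂ) {g : ℂ → ℝ} :
    (∫ α, ‖g α‖ ^ (2:ℝ) ∂p) ^ ((1:ℝ)/2) = Real.sqrt (∫ α, g α ^ 2 ∂p) := by
  have hpt : ∀ α, ‖g α‖ ^ (2:ℝ) = g α ^ 2 := fun α => by
    rw [show (2:ℝ) = ((2:ℕ):ℝ) by norm_num, Real.rpow_natCast, Real.norm_eq_abs, sq_abs]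
  simp_rw [hpt]
  rw [Real.sqrt_eq_rpow]

private lemma abs_int_mul_le (p : Measure ℂ) {f g : ℂ → ℝ}
    (hf : MemLp f 2 p) (hg : MemLp g 2 p) :
    |∫ α, f α * g α ∂p| ≤ Real.sqrt (∫ α, f α ^ 2 ∂p) * Real.sqrt (∫ α, g α ^ 2 ∂p) := by
  have h2 : ENNReal.ofReal (2:ℝ) = 2 := by norm_num
  have hpq : (2:ℝ).HolderConjugate 2 := Real.HolderConjugate.two_two
  have key := integral_mul_norm_le_Lp_mul_Lq (μ := p) hpq (h2.symm ▸ hf) (h2.symm ▸ hg)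
  calc |∫ α, f α * g α ∂p| ≤ ∫ α, ‖f α * g α‖ ∂p := by
        rw [← Real.norm_eq_abs]; exact norm_integral_le_integral_norm _
    _ = ∫ α, ‖f α‖ * ‖g α‖ ∂p := by simp_rw [norm_mul]
    _ ≤ (∫ α, ‖f α‖ ^ (2:ℝ) ∂p) ^ ((1:ℝ)/2) * (∫ α, ‖g α‖ ^ (2:ℝ) ∂p) ^ ((1:ℝ)/2) := key
    _ = _ := by rw [sqrt_two_aux p, sqrt_two_aux p]

/-- The local universality-cost coefficient: the ratio of deviation growth to
mean fidelity improvement tends to `√Var(h) / ∫ h` as `θ → 0⁺`. -/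
theorem universality_cost_slope
    (p : Measure ℂ) [IsProbabilityMeasure p]
    (f₀ : ℝ) (h : ℂ → ℝ) (hh : MemLp h 2 p)
    (r : ℝ → ℂ → ℝ) (hr : ∀ θ, MemLp (r θ) 2 p)
    (hro : (fun θ : ℝ => (eLpNorm (r θ) 2 p).toReal) =o[nhds (0 : ℝ)]
      fun θ : ℝ => |θ|)
    (hmean : 0 < ∫ α, h α ∂p) :
    Tendsto
      (fun θ : ℝ =>
        Real.sqrt ((∫ α, (f₀ + θ * h α + r θ α) ^ 2 ∂p) -
            (∫ α, (f₀ + θ * h α + r θ α) ∂p) ^ 2) /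
          ((∫ α, (f₀ + θ * h α + r θ α) ∂p) - f₀))
      (nhdsWithin (0 : ℝ) (Set.Ioi 0))
      (nhds (Real.sqrt ((∫ α, (h α) ^ 2 ∂p) - (∫ α, h α ∂p) ^ 2) /
        (∫ α, h α ∂p))) := by
  have hI0 : (∫ α, h α ∂p) ≠ 0 := ne_of_gt hmean
  have hhi : Integrable h p := hh.integrable one_le_two
  have hh2i : Integrable (fun α => h α ^ 2) p := hh.integrable_sq
  have hri : ∀ θ, Integrable (r θ) p := fun θ => (hr θ).integrable one_le_two
  have hr2i : ∀ θ, Integrable (fun α => r θ α ^ 2) p := fun θ => (hr θ).integrable_sq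
  have hhri : ∀ θ, Integrable (fun α => h α * r θ α) p := by
    intro θ
    have hmem : MemLp (h • r θ) 1 p :=
      (hr θ).smul (q := 2) hh (r := 1)
    have := memLp_one_iff_integrable.mp hmem
    exact this
  have meanEq : ∀ θ : ℝ, (∫ α, (f₀ + θ * h α + r θ α) ∂p)
      = f₀ + θ * (∫ α, h α ∂p) + (∫ α, r θ α ∂p) := by
    intro θ
    have j1 : Integrable (fun α : ℂ => f₀ + θ * h α) p :=
      (integrable_const f₀).add (hhi.const_mul θ)
    have e1 : (∫ α, (f₀ + θ * h α + r θ α) ∂p)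
        = (∫ α, (f₀ + θ * h α) ∂p) + ∫ α, r θ α ∂p := integral_add j1 (hri θ)
    have e2 : (∫ α, (f₀ + θ * h α) ∂p)
        = (∫ _α, f₀ ∂p) + ∫ α, θ * h α ∂p :=
      integral_add (integrable_const f₀) (hhi.const_mul θ)
    rw [e1, e2, integral_const, integral_const_mul]
    simp
  have sqEq : ∀ θ : ℝ, (∫ α, (f₀ + θ * h α + r θ α) ^ 2 ∂p)
      = f₀ ^ 2 + θ ^ 2 * (∫ α, h α ^ 2 ∂p) + (∫ α, r θ α ^ 2 ∂p)
        + 2 * f₀ * θ * (∫ α, h α ∂p) + 2 * f₀ * (∫ α, r θ α ∂p)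
        + 2 * θ * (∫ α, h α * r θ α ∂p) := by
    intro θ
    have i1 : Integrable (fun _ : ℂ => f₀ ^ 2) p := integrable_const _
    have i2 := hh2i.const_mul (θ ^ 2)
    have i3 := hr2i θ
    have i4 := hhi.const_mul (2 * f₀ * θ)
    have i5 := (hri θ).const_mul (2 * f₀)
    have i6 := (hhri θ).const_mul (2 * θ)
    have expand : ∀ α : ℂ, (f₀ + θ * h α + r θ α) ^ 2
        = f₀ ^ 2 + θ ^ 2 * h α ^ 2 + r θ α ^ 2 + 2 * f₀ * θ * h α
          + 2 * f₀ * r θ α + 2 * θ * (h α * r θ α) := fun α => by ring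
    have e6 : (∫ α, (f₀ ^ 2 + θ ^ 2 * h α ^ 2 + r θ α ^ 2 + 2 * f₀ * θ * h α
          + 2 * f₀ * r θ α + 2 * θ * (h α * r θ α)) ∂p)
        = (∫ α, (f₀ ^ 2 + θ ^ 2 * h α ^ 2 + r θ α ^ 2 + 2 * f₀ * θ * h α
            + 2 * f₀ * r θ α) ∂p) + ∫ α, 2 * θ * (h α * r θ α) ∂p :=
      integral_add ((((i1.add i2).add i3).add i4).add i5) i6
    have e5 : (∫ α, (f₀ ^ 2 + θ ^ 2 * h α ^ 2 + r θ α ^ 2 + 2 * f₀ * θ * h α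
          + 2 * f₀ * r θ α) ∂p)
        = (∫ α, (f₀ ^ 2 + θ ^ 2 * h α ^ 2 + r θ α ^ 2 + 2 * f₀ * θ * h α) ∂p)
          + ∫ α, 2 * f₀ * r θ α ∂p :=
      integral_add (((i1.add i2).add i3).add i4) i5
    have e4 : (∫ α, (f₀ ^ 2 + θ ^ 2 * h α ^ 2 + r θ α ^ 2 + 2 * f₀ * θ * h α) ∂p)
        = (∫ α, (f₀ ^ 2 + θ ^ 2 * h α ^ 2 + r θ α ^ 2) ∂p) + ∫ α, 2 * f₀ * θ * h α ∂p :=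
      integral_add ((i1.add i2).add i3) i4
    have e3 : (∫ α, (f₀ ^ 2 + θ ^ 2 * h α ^ 2 + r θ α ^ 2) ∂p)
        = (∫ α, (f₀ ^ 2 + θ ^ 2 * h α ^ 2) ∂p) + ∫ α, r θ α ^ 2 ∂p :=
      integral_add (i1.add i2) i3
    have e2 : (∫ α, (f₀ ^ 2 + θ ^ 2 * h α ^ 2) ∂p)
        = (∫ _α, f₀ ^ 2 ∂p) + ∫ α, θ ^ 2 * h α ^ 2 ∂p :=
      integral_add i1 i2
    simp_rw [expand]
    rw [e6, e5, e4, e3, e2, integral_const, integral_const_mul, integral_const_mul,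
      integral_const_mul, integral_const_mul]
    simp
  have hQnn : ∀ θ : ℝ, 0 ≤ ∫ α, r θ α ^ 2 ∂p := fun θ =>
    integral_nonneg fun α => sq_nonneg _
  have hSe : ∀ θ : ℝ, (eLpNorm (r θ) 2 p).toReal
      = Real.sqrt (∫ α, r θ α ^ 2 ∂p) := by
    intro θ
    rw [(hr θ).eLpNorm_eq_integral_rpow_norm two_ne_zero ENNReal.ofNat_ne_top,
      ENNReal.toReal_ofReal (Real.rpow_nonneg (integral_nonneg fun α =>
        Real.rpow_nonneg (norm_nonneg _) _) _)]
    simp only [ENNReal.toReal_ofNat]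
    rw [← one_div]
    exact sqrt_two_aux p
  have bR : ∀ θ : ℝ, |∫ α, r θ α ∂p| ≤ Real.sqrt (∫ α, r θ α ^ 2 ∂p) := by
    intro θ
    have hone : MemLp (fun _ : ℂ => (1:ℝ)) 2 p := memLp_const 1
    have := abs_int_mul_le p (hr θ) hone
    simpa using this
  have bC : ∀ θ : ℝ, |∫ α, h α * r θ α ∂p|
      ≤ Real.sqrt (∫ α, h α ^ 2 ∂p) * Real.sqrt (∫ α, r θ α ^ 2 ∂p) :=
    fun θ => abs_int_mul_le p hh (hr θ)
  have oS : (fun θ : ℝ => Real.sqrt (∫ α, r θ α ^ 2 ∂p)) =o[nhds (0:ℝ)]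
      (fun θ : ℝ => θ) := by
    have heq : (fun θ : ℝ => (eLpNorm (r θ) 2 p).toReal)
        = fun θ : ℝ => Real.sqrt (∫ α, r θ α ^ 2 ∂p) := funext hSe
    rw [heq] at hro
    exact hro.of_abs_right
  have oR : (fun θ : ℝ => ∫ α, r θ α ∂p) =o[nhds (0:ℝ)] (fun θ : ℝ => θ) :=
    (Asymptotics.isBigO_of_le _ (fun θ => by
      simpa [Real.norm_eq_abs, abs_of_nonneg (Real.sqrt_nonneg _)] using bR θ)).trans_isLittleO oS
  have oC : (fun θ : ℝ => ∫ α, h α * r θ α ∂p) =o[nhds (0:ℝ)] (fun θ : ℝ => θ) := by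
    refine (Asymptotics.IsBigO.of_bound (Real.sqrt (∫ α, h α ^ 2 ∂p)) ?_).trans_isLittleO oS
    filter_upwards with θ
    simpa [Real.norm_eq_abs, abs_of_nonneg (Real.sqrt_nonneg _)] using bC θ
  have oQ : (fun θ : ℝ => ∫ α, r θ α ^ 2 ∂p) =o[nhds (0:ℝ)] (fun θ : ℝ => θ * θ) := by
    have heq : (fun θ : ℝ => ∫ α, r θ α ^ 2 ∂p)
        = fun θ : ℝ => Real.sqrt (∫ α, r θ α ^ 2 ∂p) * Real.sqrt (∫ α, r θ α ^ 2 ∂p) :=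
      funext fun θ => (Real.mul_self_sqrt (hQnn θ)).symm
    rw [heq]
    exact oS.mul oS
  have oR2 : (fun θ : ℝ => (∫ α, r θ α ∂p) * (∫ α, r θ α ∂p)) =o[nhds (0:ℝ)]
      (fun θ : ℝ => θ * θ) := oR.mul oR
  have tR := oR.tendsto_div_nhds_zero
  have tC := oC.tendsto_div_nhds_zero
  have tQ := oQ.tendsto_div_nhds_zero
  have tR2 := oR2.tendsto_div_nhds_zero
  have tG : Tendsto (fun θ : ℝ =>
      ((∫ α, h α ^ 2 ∂p) - (∫ α, h α ∂p) ^ 2)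
        + 2 * ((∫ α, h α * r θ α ∂p) / θ)
        - 2 * (∫ α, h α ∂p) * ((∫ α, r θ α ∂p) / θ)
        + (∫ α, r θ α ^ 2 ∂p) / (θ * θ)
        - ((∫ α, r θ α ∂p) * (∫ α, r θ α ∂p)) / (θ * θ))
      (nhds (0:ℝ)) (nhds ((∫ α, h α ^ 2 ∂p) - (∫ α, h α ∂p) ^ 2)) := by
    have := ((((tendsto_const_nhds (α := ℝ)
        (x := (∫ α, h α ^ 2 ∂p) - (∫ α, h α ∂p) ^ 2)).add
      (tC.const_mul (2:ℝ))).sub (tR.const_mul (2 * ∫ α, h α ∂p))).add tQ).sub tR2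
    simpa using this
  have tsqrt := (Real.continuous_sqrt.tendsto _).comp tG
  have tden : Tendsto (fun θ : ℝ => (∫ α, h α ∂p) + (∫ α, r θ α ∂p) / θ)
      (nhds (0:ℝ)) (nhds (∫ α, h α ∂p)) := by
    simpa using (tendsto_const_nhds (α := ℝ) (x := ∫ α, h α ∂p)).add tR
  have tmain := (tsqrt.div tden hI0).mono_left
    (nhdsWithin_le_nhds (s := Set.Ioi (0:ℝ)))
  refine Tendsto.congr' ?_ tmain
  filter_upwards [self_mem_nhdsWithin] with θ hθ
  have hθpos : (0:ℝ) < θ := hθ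
  have hθ0 : θ ≠ 0 := ne_of_gt hθpos
  show Real.sqrt (((∫ α, h α ^ 2 ∂p) - (∫ α, h α ∂p) ^ 2)
        + 2 * ((∫ α, h α * r θ α ∂p) / θ)
        - 2 * (∫ α, h α ∂p) * ((∫ α, r θ α ∂p) / θ)
        + (∫ α, r θ α ^ 2 ∂p) / (θ * θ)
        - ((∫ α, r θ α ∂p) * (∫ α, r θ α ∂p)) / (θ * θ))
      / ((∫ α, h α ∂p) + (∫ α, r θ α ∂p) / θ) = _
  have eG : ((∫ α, h α ^ 2 ∂p) - (∫ α, h α ∂p) ^ 2)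
        + 2 * ((∫ α, h α * r θ α ∂p) / θ)
        - 2 * (∫ α, h α ∂p) * ((∫ α, r θ α ∂p) / θ)
        + (∫ α, r θ α ^ 2 ∂p) / (θ * θ)
        - ((∫ α, r θ α ∂p) * (∫ α, r θ α ∂p)) / (θ * θ)
      = ((∫ α, (f₀ + θ * h α + r θ α) ^ 2 ∂p)
          - (∫ α, (f₀ + θ * h α + r θ α) ∂p) ^ 2) / θ ^ 2 := by
    rw [sqEq θ, meanEq θ]
    field_simp
    ring
  have eD : (∫ α, (f₀ + θ * h α + r θ α) ∂p) - f₀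
      = θ * ((∫ α, h α ∂p) + (∫ α, r θ α ∂p) / θ) := by
    rw [meanEq θ]
    field_simp
    ring
  rw [eG, eD]
  have e3 : Real.sqrt (((∫ α, (f₀ + θ * h α + r θ α) ^ 2 ∂p)
        - (∫ α, (f₀ + θ * h α + r θ α) ∂p) ^ 2) / θ ^ 2)
      = Real.sqrt ((∫ α, (f₀ + θ * h α + r θ α) ^ 2 ∂p)
        - (∫ α, (f₀ + θ * h α + r θ α) ∂p) ^ 2) / θ := by
    rcases le_or_gt 0 ((∫ α, (f₀ + θ * h α + r θ α) ^ 2 ∂p)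
        - (∫ α, (f₀ + θ * h α + r θ α) ∂p) ^ 2) with hV | hV
    · rw [Real.sqrt_div hV, Real.sqrt_sq hθpos.le]
    · rw [Real.sqrt_eq_zero_of_nonpos hV.le, Real.sqrt_eq_zero_of_nonpos
        (div_nonpos_of_nonpos_of_nonneg hV.le (sq_nonneg θ))]
      simp
  rw [e3, div_div]
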